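/- Let m, N ≥ 1, let p ∈ (0,1)^m with Σ_i p_i = 1, let I_1, …, I_N be i.i.d. random variables taking the value i ∈ [m] with probability p_i, and let Y ∈ ℝ^m be defined by Y_i = Σ_{j=1}^N 1{I_j = i} (so Y is multinomial(N, p)). Then for every a ∈ ℝ^m and every t ≥ 0, P( |⟨Y − N p, a⟩| ≥ t ) ≤ 2 exp( −3 t² / (6 N ‖a‖_p² + 4 ‖a‖_∞ t) ), where ‖a‖_p² = Σ_{i=1}^m p_i a_i². -/

import Mathlib

set_option linter.unusedVariables false


lemma key0' (x : ℝ) : (1 - x) * Real.exp x ≤ 1 := by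
  have h := Real.add_one_le_exp (-x)
  have : (1 - x) ≤ Real.exp (-x) := by linarith
  calc (1 - x) * Real.exp x ≤ Real.exp (-x) * Real.exp x := by
        nlinarith [Real.exp_pos x]
    _ = 1 := by rw [← Real.exp_add]; simp

lemma f1_nonneg (x : ℝ) (hx : 0 ≤ x) : 0 ≤ 2 + x - (2 - x) * Real.exp x := by
  set f₁ : ℝ → ℝ := fun x => 2 + x - (2 - x) * Real.exp x with hf
  have hder : ∀ y : ℝ, HasDerivAt f₁ (1 - (1 - y) * Real.exp y) y := by
    intro y
    have h1 : HasDerivAt (fun x : ℝ => 2 + x) 1 y := by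
      simpa using (hasDerivAt_id y).const_add (2:ℝ)
    have h2 : HasDerivAt (fun x : ℝ => (2 - x) * Real.exp x)
        ((-1) * Real.exp y + (2 - y) * Real.exp y) y := by
      exact (((hasDerivAt_id y).const_sub (2:ℝ)).mul (Real.hasDerivAt_exp y))
    have := h1.sub h2
    exact this.congr_deriv (by ring)
  have hmono : Monotone f₁ := by
    apply monotone_of_deriv_nonneg
    · intro y; exact (hder y).differentiableAt
    · intro y; rw [(hder y).deriv]; nlinarith [key0' y]
  have h0 : f₁ 0 = 0 := by simp [hf]
  have := hmono hx
  rw [h0] at this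
  exact this

-- main poly bound for x ≥ 0 : exp x * (3 - x) ≤ 3 + 2x + x²/2
lemma aux1 (x : ℝ) (hx : 0 ≤ x) : (3 - x) * Real.exp x ≤ 3 + 2*x + x^2/2 := by
  set f : ℝ → ℝ := fun x => 3 + 2*x + x^2/2 - (3 - x) * Real.exp x with hf
  have hder : ∀ y : ℝ, HasDerivAt f (2 + y - (2 - y) * Real.exp y) y := by
    intro y
    have h1 : HasDerivAt (fun x : ℝ => 3 + 2*x + x^2/2) (2 + y) y := by
      have : HasDerivAt (fun x : ℝ => 3 + 2*x + x^2/2) (0 + 2*1 + 2*y^1/2) y := by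
        exact (((hasDerivAt_const y (3:ℝ)).add ((hasDerivAt_id y).const_mul 2)).add
          ((hasDerivAt_pow 2 y).div_const 2))
      convert this using 1; ring
    have h2 : HasDerivAt (fun x : ℝ => (3 - x) * Real.exp x)
        ((-1) * Real.exp y + (3 - y) * Real.exp y) y := by
      exact (((hasDerivAt_id y).const_sub (3:ℝ)).mul (Real.hasDerivAt_exp y))
    have := h1.sub h2
    exact this.congr_deriv (by ring)
  have hmono : MonotoneOn f (Set.Ici 0) := by
    apply monotoneOn_of_deriv_nonneg (convex_Ici 0)
    · exact (Continuous.continuousOn (by fun_prop))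
    · intro y hy; exact (hder y).differentiableAt.differentiableWithinAt
    · intro y hy
      rw [(hder y).deriv]
      exact f1_nonneg y (le_of_lt (by simpa using hy))
  have h0 : f 0 = 0 := by simp [hf]
  have := hmono (Set.self_mem_Ici) (Set.mem_Ici.2 hx) hx
  rw [h0] at this
  simp only [hf] at this
  linarith

lemma aux2 (x : ℝ) (hx : x ≤ 0) : Real.exp x ≤ 1 + x + x^2/2 := by
  set g : ℝ → ℝ := fun x => 1 + x + x^2/2 - Real.exp x with hg
  have hder : ∀ y : ℝ, HasDerivAt g (1 + y - Real.exp y) y := by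
    intro y
    have h1 : HasDerivAt (fun x : ℝ => 1 + x + x^2/2) (0 + 1 + 2*y^1/2) y :=
      (((hasDerivAt_const y (1:ℝ)).add (hasDerivAt_id y)).add
        ((hasDerivAt_pow 2 y).div_const 2))
    have := h1.sub (Real.hasDerivAt_exp y)
    exact this.congr_deriv (by ring)
  have hmono : Antitone g := by
    apply antitone_of_deriv_nonpos
    · intro y; exact (hder y).differentiableAt
    · intro y; rw [(hder y).deriv]
      have := Real.add_one_le_exp y; linarith
  have h0 : g 0 = 0 := by simp [hg]
  have := hmono hx
  rw [h0] at this
  simp only [hg] at this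
  linarith

lemma exp_quad (x c : ℝ) (hxc : x ≤ c) (hc0 : 0 ≤ c) (hc3 : c < 3) :
    Real.exp x ≤ 1 + x + x^2 / (2*(1 - c/3)) := by
  have hd : 0 < 2*(1 - c/3) := by linarith
  rcases le_or_gt x 0 with hx | hx
  · have h := aux2 x hx
    have h2 : x^2/2 ≤ x^2 / (2*(1 - c/3)) := by
      apply div_le_div_of_nonneg_left (sq_nonneg x) hd
      linarith
    linarith
  · have h := aux1 x hx.le
    have hE := Real.add_one_le_exp x
    have key : (Real.exp x - 1 - x) * (2*(1 - c/3)) ≤ x^2 := by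
      nlinarith [Real.exp_pos x, mul_nonneg (by linarith : (0:ℝ) ≤ Real.exp x - 1 - x) (by linarith : (0:ℝ) ≤ c - x)]
    have := (le_div_iff₀ hd).mpr key
    linarith


lemma sum_prod_pow {m N : ℕ} (g : Fin m → ℝ) :
    ∑ z : Fin N → Fin m, ∏ j, g (z j) = (∑ i, g i)^N := by
  rw [← Fintype.piFinset_univ, ← Finset.prod_univ_sum]
  simp


lemma onesided {m N : ℕ} (hm : 1 ≤ m) (hN : 1 ≤ N)
    (p : Fin m → ℝ) (hp₀ : ∀ i, 0 < p i) (hsum : ∑ i, p i = 1)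
    (a : Fin m → ℝ) (t : ℝ) (ht : 0 ≤ t)
    (M : ℝ) (hM : ∀ i, |a i| ≤ M) (v : ℝ) (hv : v = ∑ i, p i * a i ^ 2) :
    (∑ z : Fin N → Fin m,
       if t ≤ ∑ j, (a (z j) - ∑ i, p i * a i) then ∏ j, p (z j) else 0)
    ≤ Real.exp (-3 * t ^ 2 / (6 * N * v + 4 * M * t)) := by
  have hm0 : 0 < m := hm
  set μ := ∑ i, p i * a i with hμ
  have hw : ∀ z : Fin N → Fin m, 0 ≤ ∏ j, p (z j) :=
    fun z => Finset.prod_nonneg fun j _ => (hp₀ (z j)).le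
  have hprob : ∑ z : Fin N → Fin m, ∏ j, p (z j) = 1 := by
    rw [sum_prod_pow, hsum, one_pow]
  have hv0 : 0 ≤ v := by
    rw [hv]; exact Finset.sum_nonneg fun i _ => mul_nonneg (hp₀ i).le (sq_nonneg _)
  have hM0 : 0 ≤ M := le_trans (abs_nonneg _) (hM ⟨0, hm0⟩)
  have hN1 : (1:ℝ) ≤ (N:ℝ) := by exact_mod_cast hN
  rcases eq_or_lt_of_le ht with h0 | hpos
  · -- t = 0
    have hrhs : Real.exp (-3 * t ^ 2 / (6 * N * v + 4 * M * t)) = 1 := by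
      rw [← h0]; norm_num
    rw [hrhs]
    calc (∑ z : Fin N → Fin m,
            if t ≤ ∑ j, (a (z j) - μ) then ∏ j, p (z j) else 0)
        ≤ ∑ z : Fin N → Fin m, ∏ j, p (z j) := by
          apply Finset.sum_le_sum
          intro z _
          split_ifs
          · exact le_refl _
          · exact hw z
      _ = 1 := hprob
  rcases eq_or_lt_of_le hv0 with hv00 | hvpos
  · -- v = 0 → a = 0
    have ha : ∀ i, a i = 0 := by
      intro i
      have h := (Finset.sum_eq_zero_iff_of_nonneg
        (fun i _ => mul_nonneg (hp₀ i).le (sq_nonneg (a i)))).mp (hv ▸ hv00.symm) i (Finset.mem_univ i)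
      have := (hp₀ i).ne'
      have ha2 : a i ^ 2 = 0 := by
        rcases mul_eq_zero.mp h with h' | h'
        · exact absurd h' this
        · exact h'
      exact pow_eq_zero_iff (by norm_num) |>.mp ha2
    have hcond : ∀ z : Fin N → Fin m, ¬ (t ≤ ∑ j, (a (z j) - μ)) := by
      intro z
      have : (∑ j, (a (z j) - μ)) = 0 := by
        have hμ0 : μ = 0 := by simp [hμ, ha]
        simp [ha, hμ0]
      rw [this]
      exact not_le.mpr hpos
    have : (∑ z : Fin N → Fin m,
        if t ≤ ∑ j, (a (z j) - μ) then ∏ j, p (z j) else 0) = 0 := by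
      apply Finset.sum_eq_zero
      intro z _
      rw [if_neg (hcond z)]
    rw [this]
    positivity
  -- main case : t > 0, v > 0
  have hMpos : 0 < M := by
    rcases eq_or_lt_of_le hM0 with h | h
    · exfalso
      have ha : ∀ i, a i = 0 := by
        intro i
        have := hM i
        rw [← h] at this
        simpa using le_antisymm this (abs_nonneg _)
      have : v = 0 := by simp [hv, ha]
      exact absurd this (ne_of_gt hvpos)
    · exact h
  set D : ℝ := N * v + 2 * M * t / 3 with hDdef
  have hD : 0 < D := by
    have : 0 < (N:ℝ) * v := by positivity
    have : 0 < 2 * M * t / 3 := by positivity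
    positivity
  set lam : ℝ := t / D with hlamdef
  have hlam : 0 < lam := div_pos hpos hD
  have hc0 : 0 ≤ lam * (2 * M) := by positivity
  have hc3 : lam * (2 * M) < 3 := by
    rw [hlamdef, div_mul_eq_mul_div, div_lt_iff₀ hD, hDdef]
    have h1 : 0 < (N:ℝ) * v := by positivity
    nlinarith
  set d : ℝ := 2 * (1 - lam * (2 * M) / 3) with hddef
  have hdval : d = 2 * N * v / D := by
    rw [hddef, hlamdef]
    field_simp
    ring
  have hdpos : 0 < d := by
    rw [hdval]; positivity
  have hμabs : |μ| ≤ M := by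
    calc |∑ i, p i * a i| ≤ ∑ i, |p i * a i| := Finset.abs_sum_le_sum_abs _ _
      _ ≤ ∑ i, p i * M := by
          apply Finset.sum_le_sum
          intro i _
          rw [abs_mul, abs_of_pos (hp₀ i)]
          exact mul_le_mul_of_nonneg_left (hM i) (hp₀ i).le
      _ = M := by rw [← Finset.sum_mul, hsum, one_mul]
  have hXle : ∀ i, lam * (a i - μ) ≤ lam * (2 * M) := by
    intro i
    apply mul_le_mul_of_nonneg_left _ hlam.le
    have h1 : a i ≤ M := le_trans (le_abs_self _) (hM i)
    have h2 : -M ≤ μ := neg_le_of_abs_le hμabs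
    linarith
  -- Chernoff pointwise bound
  have step1 : ∀ z : Fin N → Fin m,
      (if t ≤ ∑ j, (a (z j) - μ) then ∏ j, p (z j) else 0)
      ≤ Real.exp (-(lam * t)) * ∏ j, (p (z j) * Real.exp (lam * (a (z j) - μ))) := by
    intro z
    have hR : Real.exp (-(lam * t)) * ∏ j, (p (z j) * Real.exp (lam * (a (z j) - μ)))
        = (Real.exp (-(lam * t)) * Real.exp (lam * ∑ j, (a (z j) - μ))) * ∏ j, p (z j) := by
      rw [Finset.prod_mul_distrib, ← Real.exp_sum, Finset.mul_sum]
      ring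
    rw [hR]
    split_ifs with hcond
    · have h1 : (1:ℝ) ≤ Real.exp (-(lam * t)) * Real.exp (lam * ∑ j, (a (z j) - μ)) := by
        rw [← Real.exp_add]
        rw [Real.one_le_exp_iff]
        have := mul_le_mul_of_nonneg_left hcond hlam.le
        linarith
      simpa using mul_le_mul_of_nonneg_right h1 (hw z)
    · apply mul_nonneg
      · apply mul_nonneg (Real.exp_pos _).le (Real.exp_pos _).le
      · exact hw z
  have step2 : ∑ z : Fin N → Fin m,
        Real.exp (-(lam * t)) * ∏ j, (p (z j) * Real.exp (lam * (a (z j) - μ)))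
      = Real.exp (-(lam * t)) * (∑ i, p i * Real.exp (lam * (a i - μ)))^N := by
    rw [← Finset.mul_sum]
    congr 1
    exact sum_prod_pow (fun i => p i * Real.exp (lam * (a i - μ)))
  -- mgf bound
  have e1 : ∑ i, p i * (a i - μ) = 0 := by
    simp only [mul_sub]
    rw [Finset.sum_sub_distrib, ← Finset.sum_mul, hsum]
    simp [hμ]
  have e2 : ∑ i, p i * (a i - μ)^2 ≤ v := by
    have expand : ∑ i, p i * (a i - μ)^2 = v - μ^2 := by
      calc ∑ i, p i * (a i - μ)^2
          = ∑ i, (p i * a i^2 - (2*μ)*(p i * a i) + μ^2 * p i) :=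
            Finset.sum_congr rfl (fun i _ => by ring)
        _ = (∑ i, (p i * a i^2 - (2*μ)*(p i * a i))) + ∑ i, μ^2 * p i :=
            Finset.sum_add_distrib
        _ = ((∑ i, p i * a i^2) - ∑ i, (2*μ)*(p i * a i)) + ∑ i, μ^2 * p i := by
            rw [Finset.sum_sub_distrib]
        _ = ((∑ i, p i * a i^2) - (2*μ)*(∑ i, p i * a i)) + μ^2 * (∑ i, p i) := by
            rw [← Finset.mul_sum, ← Finset.mul_sum]
        _ = v - μ^2 := by rw [hsum, ← hμ, ← hv]; ring
    nlinarith [sq_nonneg μ]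
  have hmgf : ∑ i, p i * Real.exp (lam * (a i - μ)) ≤ 1 + lam^2 * v / d := by
    calc ∑ i, p i * Real.exp (lam * (a i - μ))
        ≤ ∑ i, p i * (1 + lam * (a i - μ) + (lam * (a i - μ))^2 / d) := by
          apply Finset.sum_le_sum
          intro i _
          exact mul_le_mul_of_nonneg_left (exp_quad _ _ (hXle i) hc0 hc3) (hp₀ i).le
      _ = ∑ i, (p i + lam * (p i * (a i - μ)) + (lam^2/d) * (p i * (a i - μ)^2)) :=
            Finset.sum_congr rfl (fun i _ => by field_simp)
      _ = (∑ i, (p i + lam * (p i * (a i - μ)))) + ∑ i, (lam^2/d) * (p i * (a i - μ)^2) :=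
            Finset.sum_add_distrib
      _ = 1 + (lam^2/d) * ∑ i, p i * (a i - μ)^2 := by
            rw [Finset.sum_add_distrib]
            simp only [← Finset.mul_sum]
            rw [hsum, e1]; ring
      _ ≤ 1 + lam^2 * v / d := by
          have h := mul_le_mul_of_nonneg_left e2 (by positivity : (0:ℝ) ≤ lam^2/d)
          have heq : (lam^2/d) * v = lam^2 * v / d := by ring
          linarith
  have hmgf0 : 0 ≤ ∑ i, p i * Real.exp (lam * (a i - μ)) :=
    Finset.sum_nonneg fun i _ => mul_nonneg (hp₀ i).le (Real.exp_pos _).le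
  have hpow : (∑ i, p i * Real.exp (lam * (a i - μ)))^N ≤ Real.exp (N * (lam^2 * v / d)) := by
    calc (∑ i, p i * Real.exp (lam * (a i - μ)))^N
        ≤ (Real.exp (lam^2 * v / d))^N := by
          apply pow_le_pow_left₀ hmgf0
          exact le_trans hmgf (by linarith [Real.add_one_le_exp (lam^2 * v / d)])
      _ = Real.exp (N * (lam^2 * v / d)) := (Real.exp_nat_mul _ N).symm
  have hexp_eq : -(lam * t) + N * (lam^2 * v / d) = -3 * t^2 / (6 * N * v + 4 * M * t) := by
    have h6 : 6 * (N:ℝ) * v + 4 * M * t = 6 * D := by rw [hDdef]; ring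
    have hD' : D ≠ 0 := hD.ne'
    have hv' : v ≠ 0 := hvpos.ne'
    have hN' : (N:ℝ) ≠ 0 := by positivity
    rw [h6, hlamdef, hdval]
    field_simp
    ring
  calc (∑ z : Fin N → Fin m,
          if t ≤ ∑ j, (a (z j) - μ) then ∏ j, p (z j) else 0)
      ≤ ∑ z : Fin N → Fin m,
          Real.exp (-(lam * t)) * ∏ j, (p (z j) * Real.exp (lam * (a (z j) - μ))) :=
        Finset.sum_le_sum fun z _ => step1 z
    _ = Real.exp (-(lam * t)) * (∑ i, p i * Real.exp (lam * (a i - μ)))^N := step2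
    _ ≤ Real.exp (-(lam * t)) * Real.exp (N * (lam^2 * v / d)) :=
        mul_le_mul_of_nonneg_left hpow (Real.exp_pos _).le
    _ = Real.exp (-(lam * t) + N * (lam^2 * v / d)) := (Real.exp_add _ _).symm
    _ = Real.exp (-3 * t^2 / (6 * N * v + 4 * M * t)) := by rw [hexp_eq]

open scoped Classical


theorem multinomial_bernstein {m N : ℕ} (hm : 1 ≤ m) (hN : 1 ≤ N)
    (p : Fin m → ℝ) (hp₀ : ∀ i, 0 < p i) (hp₁ : ∀ i, p i < 1) (hsum : ∑ i, p i = 1)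
    (a : Fin m → ℝ) (t : ℝ) (ht : 0 ≤ t) :
    (∑ z : Fin N → Fin m,
        if t ≤ |∑ i, (((Finset.univ.filter fun j => z j = i).card : ℝ) - N * p i) * a i|
        then ∏ j, p (z j) else 0)
      ≤ 2 * Real.exp (-3 * t ^ 2 /
          (6 * N * (∑ i, p i * a i ^ 2) + 4 * (⨆ i, |a i|) * t)) := by
  have hw : ∀ z : Fin N → Fin m, 0 ≤ ∏ j, p (z j) :=
    fun z => Finset.prod_nonneg fun j _ => (hp₀ (z j)).le
  set μ : ℝ := ∑ i, p i * a i with hμ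
  -- counting identity
  have hS : ∀ z : Fin N → Fin m,
      (∑ i, (((Finset.univ.filter fun j => z j = i).card : ℝ) - N * p i) * a i)
      = ∑ j, (a (z j) - μ) := by
    intro z
    have hcount : ∀ i : Fin m,
        ((Finset.univ.filter fun j => z j = i).card : ℝ) * a i
        = ∑ j : Fin N, if z j = i then a i else 0 := by
      intro i
      rw [← Finset.sum_filter]
      rw [Finset.sum_const, nsmul_eq_mul]
    have h1 : (∑ i, (((Finset.univ.filter fun j => z j = i).card : ℝ)) * a i)
        = ∑ j, a (z j) := by
      rw [Finset.sum_congr rfl fun i _ => hcount i, Finset.sum_comm]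
      apply Finset.sum_congr rfl
      intro j _
      simp
    calc (∑ i, (((Finset.univ.filter fun j => z j = i).card : ℝ) - N * p i) * a i)
        = (∑ i, (((Finset.univ.filter fun j => z j = i).card : ℝ)) * a i)
          - ∑ i, (N:ℝ) * (p i * a i) := by
          rw [← Finset.sum_sub_distrib]
          exact Finset.sum_congr rfl fun i _ => by ring
      _ = (∑ j, a (z j)) - (N:ℝ) * μ := by rw [h1, ← Finset.mul_sum, hμ]
      _ = ∑ j, (a (z j) - μ) := by
          rw [Finset.sum_sub_distrib, Finset.sum_const, Finset.card_univ,
            Fintype.card_fin, nsmul_eq_mul]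
  -- sup bound
  set M : ℝ := ⨆ i, |a i| with hMdef
  have hM : ∀ i, |a i| ≤ M :=
    fun i => le_ciSup (f := fun i => |a i|) (Set.Finite.bddAbove (Set.finite_range _)) i
  set v : ℝ := ∑ i, p i * a i ^ 2 with hvdef
  -- negated versions
  have hMneg : ∀ i, |(-a i)| ≤ M := fun i => by rw [abs_neg]; exact hM i
  have hvneg : v = ∑ i, p i * (-a i) ^ 2 := by
    rw [hvdef]; exact Finset.sum_congr rfl fun i _ => by ring
  have hneg : ∀ z : Fin N → Fin m,
      (∑ j, ((-a (z j)) - ∑ i, p i * (-a i))) = -(∑ j, (a (z j) - μ)) := by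
    intro z
    rw [← Finset.sum_neg_distrib]
    apply Finset.sum_congr rfl
    intro j _
    have : ∑ i, p i * (-a i) = -μ := by
      rw [hμ, ← Finset.sum_neg_distrib]
      exact Finset.sum_congr rfl fun i _ => by ring
    rw [this]; ring
  have hB := onesided hm hN p hp₀ hsum (fun i => -a i) t ht M hMneg v hvneg
  have hA := onesided hm hN p hp₀ hsum a t ht M hM v hvdef
  calc (∑ z : Fin N → Fin m,
          if t ≤ |∑ i, (((Finset.univ.filter fun j => z j = i).card : ℝ) - N * p i) * a i|
          then ∏ j, p (z j) else 0)
      ≤ ∑ z : Fin N → Fin m,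
          ((if t ≤ ∑ j, (a (z j) - μ) then ∏ j, p (z j) else 0)
           + (if t ≤ ∑ j, ((-a (z j)) - ∑ i, p i * (-a i)) then ∏ j, p (z j) else 0)) := by
        apply Finset.sum_le_sum
        intro z _
        rw [hS z, hneg z]
        rcases le_or_gt t |∑ j, (a (z j) - μ)| with hcase | hcase
        · rw [if_pos hcase]
          rcases le_abs.mp hcase with h | h
          · rw [if_pos h]
            split_ifs
            · linarith [hw z]
            · linarith [hw z]
          · rw [if_pos h]
            split_ifs
            · linarith [hw z]
            · linarith [hw z]
        · rw [if_neg (not_le.mpr hcase)]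
          have := hw z
          split_ifs <;> simp <;> linarith
    _ = (∑ z : Fin N → Fin m, if t ≤ ∑ j, (a (z j) - μ) then ∏ j, p (z j) else 0)
        + (∑ z : Fin N → Fin m,
            if t ≤ ∑ j, ((-a (z j)) - ∑ i, p i * (-a i)) then ∏ j, p (z j) else 0) :=
        Finset.sum_add_distrib
    _ ≤ Real.exp (-3 * t ^ 2 / (6 * N * v + 4 * M * t))
        + Real.exp (-3 * t ^ 2 / (6 * N * v + 4 * M * t)) := add_le_add hA hB
    _ = 2 * Real.exp (-3 * t ^ 2 / (6 * N * v + 4 * M * t)) := by ring
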